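/- arXiv:1407.4216 — 5 statements merged into one kernel-verified Lean document; each statement's English description precedes it below -/
import Mathlib

section
/- Let φ be a function holomorphic on the strip D(a,b) = {s : a < Re s < b}. Suppose φ is strongly universal in D(a,b), meaning: for every compact subset K of D(a,b) with connected complement, every function f continuous on K and holomorphic in the interior of K, and every ε > 0, the set of τ ∈ [0,T] with sup_{s∈K} |φ(s+iτ) − f(s)| < ε has positive lower density as T → ∞. Then for any σ₁, σ₂ with a < σ₁ < σ₂ < b, there exists a constant C > 0 such that the number N(T; σ₁, σ₂; φ) of zeros ρ of φ with σ₁ ≤ Re ρ ≤ σ₂ and 0 ≤ Im ρ ≤ T is at least C·T for all sufficiently large T. -/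
open Complex Filter MeasureTheory Set

/-- The lower density of a set of real numbers. -/
noncomputable def lowerDensity (S : Set ℝ) : ℝ :=
  Filter.liminf (fun T : ℝ => (MeasureTheory.volume (S ∩ Set.Icc 0 T)).toReal / T)
    Filter.atTop

/-- The number of zeros `ρ` of `φ` with `σ₁ ≤ Re ρ ≤ σ₂` and `0 ≤ Im ρ ≤ T`. -/
noncomputable def zeroCount (φ : ℂ → ℂ) (σ₁ σ₂ T : ℝ) : ℕ :=
  Set.ncard {ρ : ℂ | φ ρ = 0 ∧ σ₁ ≤ ρ.re ∧ ρ.re ≤ σ₂ ∧ 0 ≤ ρ.im ∧ ρ.im ≤ T}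


lemma aux_compl_ball (c : ℂ) {r : ℝ} (hr : 0 < r) :
    IsConnected (Metric.closedBall c r)ᶜ := by
  have hrank : 1 < Module.rank ℝ ℂ := by
    rw [Complex.rank_real_complex]; norm_num
  have h0 : IsPathConnected ({0}ᶜ : Set ℂ) :=
    isPathConnected_compl_singleton_of_one_lt_rank hrank 0
  have hcont : ContinuousOn (fun z : ℂ => c + (1 + r / ‖z‖) • z) ({0}ᶜ : Set ℂ) := by
    apply continuousOn_const.add
    apply ContinuousOn.smul (f := fun z : ℂ => 1 + r / ‖z‖) (g := fun z => z) _ continuousOn_id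
    exact continuousOn_const.add (continuousOn_const.div continuous_norm.continuousOn
      (fun z hz => norm_ne_zero_iff.2 hz))
  have himg := (h0.image' hcont).isConnected
  convert himg using 1
  ext w
  simp only [Set.mem_compl_iff, Metric.mem_closedBall, not_le, Set.mem_image,
    Set.mem_singleton_iff, dist_eq_norm]
  constructor
  · intro hw
    have ht : (0:ℝ) < ‖w - c‖ := lt_trans hr hw
    have h1 : (0:ℝ) < 1 - r / ‖w - c‖ := by
      rw [sub_pos, div_lt_one ht]; exact hw
    set z := (1 - r / ‖w - c‖) • (w - c) with hzdef
    have hnz : ‖z‖ = ‖w - c‖ - r := by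
      rw [hzdef, norm_smul, Real.norm_eq_abs, abs_of_pos h1]
      rw [sub_mul, one_mul, div_mul_cancel₀ _ ht.ne']
    refine ⟨z, ?_, ?_⟩
    · intro h0'
      rw [h0', norm_zero] at hnz
      linarith
    · rw [hzdef, smul_smul]
      have key : (1 + r / ‖(1 - r / ‖w - c‖) • (w - c)‖) * (1 - r / ‖w - c‖) = 1 := by
        have h2 : ‖w - c‖ - r ≠ 0 := by linarith
        have e1 : 1 + r / (‖w - c‖ - r) = ‖w - c‖ / (‖w - c‖ - r) := by
          rw [eq_div_iff h2, add_mul, one_mul, div_mul_cancel₀ _ h2]; ring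
        have e2 : 1 - r / ‖w - c‖ = (‖w - c‖ - r) / ‖w - c‖ := by
          rw [eq_div_iff ht.ne', sub_mul, one_mul, div_mul_cancel₀ _ ht.ne']
        rw [← hzdef, hnz, e1, e2, div_mul_div_comm, mul_comm (‖w - c‖ - r) ‖w - c‖,
          div_self (mul_ne_zero ht.ne' h2)]
      rw [key, one_smul]
      ring
  · rintro ⟨z, hz, rfl⟩
    have hz' : (0:ℝ) < ‖z‖ := norm_pos_iff.2 hz
    have he : c + (1 + r / ‖z‖) • z - c = (1 + r / ‖z‖) • z := by
      rw [add_sub_cancel_left]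
    rw [he, norm_smul, Real.norm_eq_abs]
    have hpos : (0:ℝ) < 1 + r / ‖z‖ := by positivity
    rw [abs_of_pos hpos]
    show r < (1 + r / ‖z‖) * ‖z‖
    have : (1 + r / ‖z‖) * ‖z‖ = ‖z‖ + r := by
      rw [add_mul, one_mul, div_mul_cancel₀ _ hz'.ne']
    rw [this]
    linarith


lemma aux_exists_zero {g : ℂ → ℂ} {c : ℂ} {δ : ℝ} (hδ : 0 < δ)
    (hg : ∀ s ∈ Metric.closedBall c δ, DifferentiableAt ℂ g s)
    (hb : ∀ s ∈ Metric.closedBall c δ, ‖g s - (s - c)‖ < δ / 3) :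
    ∃ s ∈ Metric.closedBall c δ, g s = 0 := by
  by_contra hcon
  push_neg at hcon
  have hfr : ∀ z ∈ Metric.sphere c δ, ‖(g z)⁻¹‖ ≤ 3 / (2 * δ) := by
    intro z hz
    have hz' : z ∈ Metric.closedBall c δ := Metric.sphere_subset_closedBall hz
    have h1 : ‖z - c‖ = δ := by
      rw [← dist_eq_norm]; exact hz
    have h2 : ‖g z - (z - c)‖ < δ / 3 := hb z hz'
    have h3 : 2 * δ / 3 ≤ ‖g z‖ := by
      have := norm_sub_norm_le (z - c) (g z)
      rw [h1] at this
      have h4 : ‖z - c - g z‖ = ‖g z - (z - c)‖ := norm_sub_rev _ _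
      linarith [h4 ▸ this]
    rw [norm_inv]
    rw [inv_le_comm₀ (lt_of_lt_of_le (by positivity) h3) (by positivity)]
    calc (3 / (2 * δ))⁻¹ = 2 * δ / 3 := by field_simp
    _ ≤ ‖g z‖ := h3
  have hd : DiffContOnCl ℂ (fun s => (g s)⁻¹) (Metric.ball c δ) := by
    have hda : ∀ s ∈ Metric.closedBall c δ, DifferentiableAt ℂ (fun s => (g s)⁻¹) s :=
      fun s hs => (hg s hs).inv (hcon s hs)
    refine ⟨fun s hs => (hda s (Metric.ball_subset_closedBall hs)).differentiableWithinAt, ?_⟩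
    rw [closure_ball c hδ.ne']
    exact fun s hs => (hda s hs).continuousAt.continuousWithinAt
  have hmax := Complex.norm_le_of_forall_mem_frontier_norm_le Metric.isBounded_ball hd
    (fun z hz => hfr z (by rwa [frontier_ball c hδ.ne'] at hz))
    (z := c) (by rw [closure_ball c hδ.ne']; exact Metric.mem_closedBall_self hδ.le)
  have hc0 : ‖g c‖ < δ / 3 := by
    have := hb c (Metric.mem_closedBall_self hδ.le)
    simpa using this
  have hgc : g c ≠ 0 := hcon c (Metric.mem_closedBall_self hδ.le)
  rw [norm_inv] at hmax
  have h5 : 2 * δ / 3 ≤ ‖g c‖ := by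
    have hpos : (0:ℝ) < ‖g c‖ := norm_pos_iff.2 hgc
    rw [inv_le_comm₀ hpos (by positivity)] at hmax
    calc 2 * δ / 3 = (3 / (2 * δ))⁻¹ := by field_simp
    _ ≤ ‖g c‖ := hmax
  linarith


lemma aux_finite_zeros {φ : ℂ → ℂ} {U : Set ℂ} (hUo : IsOpen U) (hUc : IsPreconnected U)
    (hφ : DifferentiableOn ℂ φ U) {z₀ : ℂ} (hz₀ : z₀ ∈ U) (hz₀' : φ z₀ ≠ 0)
    {Q : Set ℂ} (hQ : IsCompact Q) (hQU : Q ⊆ U) :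
    {z ∈ Q | φ z = 0}.Finite := by
  by_contra hinf
  have hinf' : {z ∈ Q | φ z = 0}.Infinite := hinf
  obtain ⟨x, hxQ, hx⟩ := hinf'.exists_accPt_of_subset_isCompact hQ
    (Set.sep_subset Q (fun z => φ z = 0))
  have hxU : x ∈ U := hQU hxQ
  have han : AnalyticAt ℂ φ x := hφ.analyticAt (hUo.mem_nhds hxU)
  rcases han.eventually_eq_zero_or_eventually_ne_zero with h | h
  · have : Set.EqOn φ 0 U :=
      (hφ.analyticOnNhd hUo).eqOn_zero_of_preconnected_of_eventuallyEq_zero hUc hxU h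
    exact hz₀' (this hz₀)
  · rw [AccPt] at hx
    obtain ⟨w, hw1, hw2⟩ := (Filter.inf_principal_neBot_iff.mp hx) _ h
    exact hw1 hw2.2

/-- Strong universality of a function holomorphic in the strip `D(a,b)` implies a
linear lower bound for the number of its zeros in any closed substrip. -/
theorem zeroCount_lower_bound_of_strongly_universal (a b : ℝ) (hab : a < b) (φ : ℂ → ℂ)
    (hφ : DifferentiableOn ℂ φ {s : ℂ | a < s.re ∧ s.re < b})
    (hsu : ∀ K : Set ℂ, IsCompact K → K ⊆ {s : ℂ | a < s.re ∧ s.re < b} →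
      IsConnected Kᶜ → ∀ f : ℂ → ℂ, ContinuousOn f K →
      DifferentiableOn ℂ f (interior K) → ∀ ε : ℝ, 0 < ε →
      0 < lowerDensity {τ : ℝ | ∀ s ∈ K, ‖φ (s + τ * Complex.I) - f s‖ < ε})
    (σ₁ σ₂ : ℝ) (h1 : a < σ₁) (h12 : σ₁ < σ₂) (h2 : σ₂ < b) :
    ∃ C : ℝ, 0 < C ∧ ∀ᶠ T in atTop, C * T ≤ (zeroCount φ σ₁ σ₂ T : ℝ) := by
  set U : Set ℂ := {s : ℂ | a < s.re ∧ s.re < b} with hU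
  have hUo : IsOpen U := by
    have : U = Complex.re ⁻¹' Set.Ioo a b := rfl
    rw [this]
    exact isOpen_Ioo.preimage Complex.continuous_re
  have hUc : IsPreconnected U := by
    have : U = Complex.reCLM.toLinearMap ⁻¹' Set.Ioo a b := rfl
    rw [this]
    exact ((convex_Ioo a b).linear_preimage _).isPreconnected
  set σ₀ : ℝ := (σ₁ + σ₂) / 2 with hσ₀
  set δ : ℝ := (σ₂ - σ₁) / 2 with hδdef
  have hδ : 0 < δ := by simp [hδdef]; linarith
  set K : Set ℂ := Metric.closedBall (σ₀ : ℂ) δ with hK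
  -- basic facts about members of K
  have hKre : ∀ s ∈ K, σ₁ ≤ s.re ∧ s.re ≤ σ₂ ∧ |s.im| ≤ δ := by
    intro s hs
    rw [hK, Metric.mem_closedBall, dist_eq_norm] at hs
    have hre : |(s - (σ₀:ℂ)).re| ≤ δ := le_trans (Complex.abs_re_le_norm _) hs
    have him : |(s - (σ₀:ℂ)).im| ≤ δ := le_trans (Complex.abs_im_le_norm _) hs
    simp only [Complex.sub_re, Complex.sub_im, Complex.ofReal_re, Complex.ofReal_im,
      sub_zero] at hre him
    rw [abs_le] at hre
    refine ⟨by simp [hσ₀, hδdef] at hre ⊢; linarith [hre.1], by simp [hσ₀, hδdef] at hre ⊢; linarith [hre.2], him⟩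
  have hKU : K ⊆ U := by
    intro s hs
    obtain ⟨hl, hr, -⟩ := hKre s hs
    exact ⟨lt_of_lt_of_le h1 hl, lt_of_le_of_lt hr h2⟩
  -- apply universality
  have hc := hsu K (isCompact_closedBall _ _) hKU (aux_compl_ball _ hδ)
    (fun s => s - (σ₀ : ℂ)) ((continuous_id.sub continuous_const).continuousOn)
    ((differentiable_id.sub_const _).differentiableOn) (δ / 3) (by linarith)
  set S : Set ℝ := {τ : ℝ | ∀ s ∈ K, ‖φ (s + τ * Complex.I) - (s - (σ₀:ℂ))‖ < δ / 3} with hSdef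
  -- key: each τ ∈ S produces a zero
  have key : ∀ τ ∈ S, ∃ ρ : ℂ, φ ρ = 0 ∧ σ₁ ≤ ρ.re ∧ ρ.re ≤ σ₂ ∧
      τ - δ ≤ ρ.im ∧ ρ.im ≤ τ + δ := by
    intro τ hτ
    have hmem : ∀ s ∈ Metric.closedBall (σ₀:ℂ) δ, s + τ * Complex.I ∈ U := by
      intro s hs
      have h : a < s.re ∧ s.re < b := hKU hs
      have hre : (s + (τ:ℂ) * Complex.I).re = s.re := by simp
      show a < (s + (τ:ℂ) * Complex.I).re ∧ (s + (τ:ℂ) * Complex.I).re < b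
      rw [hre]; exact h
    obtain ⟨s₀, hs₀K, hs₀0⟩ := aux_exists_zero (g := fun s => φ (s + τ * Complex.I)) hδ
      (fun s hs => (hφ.differentiableAt (hUo.mem_nhds (hmem s hs))).comp s
        (differentiableAt_id.add_const _))
      (fun s hs => hτ s hs)
    obtain ⟨hl, hr, him⟩ := hKre s₀ hs₀K
    rw [abs_le] at him
    refine ⟨s₀ + τ * Complex.I, hs₀0, ?_, ?_, ?_, ?_⟩ <;>
      simp [Complex.add_re, Complex.add_im, Complex.mul_re, Complex.mul_im] <;> linarith
  -- S is nonempty, giving a point where φ ≠ 0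
  have hSne : S.Nonempty := by
    by_contra h
    rw [Set.not_nonempty_iff_eq_empty] at h
    rw [lowerDensity] at hc
    simp only [h, Set.empty_inter, measure_empty, ENNReal.toReal_zero, zero_div,
      liminf_const] at hc
    exact lt_irrefl 0 hc
  obtain ⟨τ₀, hτ₀⟩ := hSne
  have hz₀mem : ((σ₀:ℂ) + δ) ∈ K := by
    rw [hK, Metric.mem_closedBall]
    simp [dist_eq_norm, abs_of_pos hδ]
  have hz₀U : ((σ₀:ℂ) + δ) + τ₀ * Complex.I ∈ U := by
    have h : a < ((σ₀:ℂ) + δ).re ∧ ((σ₀:ℂ) + δ).re < b := hKU hz₀mem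
    have hre : (((σ₀:ℂ) + δ) + (τ₀:ℂ) * Complex.I).re = ((σ₀:ℂ) + δ).re := by simp
    show a < (((σ₀:ℂ) + δ) + (τ₀:ℂ) * Complex.I).re ∧
      (((σ₀:ℂ) + δ) + (τ₀:ℂ) * Complex.I).re < b
    rw [hre]; exact h
  have hz₀' : φ (((σ₀:ℂ) + δ) + τ₀ * Complex.I) ≠ 0 := by
    intro h0
    have := hτ₀ _ hz₀mem
    rw [h0] at this
    simp only [zero_sub, norm_neg, add_sub_cancel_left] at this
    rw [Complex.norm_real, Real.norm_eq_abs, abs_of_pos hδ] at this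
    linarith
  -- bounded below for liminf
  have hbdd : Filter.IsBoundedUnder (· ≥ ·) Filter.atTop
      (fun T : ℝ => (MeasureTheory.volume (S ∩ Set.Icc 0 T)).toReal / T) := by
    refine ⟨0, Filter.eventually_map.mpr ?_⟩
    filter_upwards [Filter.eventually_ge_atTop (0:ℝ)] with T hT
    exact div_nonneg ENNReal.toReal_nonneg hT
  set c : ℝ := lowerDensity S with hcdef
  have hclim : c / 2 < Filter.liminf
      (fun T : ℝ => (MeasureTheory.volume (S ∩ Set.Icc 0 T)).toReal / T) Filter.atTop :=
    half_lt_self hc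
  have hev1 : ∀ᶠ T in Filter.atTop,
      c / 2 < (MeasureTheory.volume (S ∩ Set.Icc 0 T)).toReal / T :=
    eventually_lt_of_lt_liminf hclim hbdd
  refine ⟨c / (8 * δ), div_pos hc (by linarith), ?_⟩
  filter_upwards [hev1, Filter.eventually_ge_atTop (2 * δ), Filter.eventually_ge_atTop 1,
    Filter.eventually_ge_atTop (8 * δ / c)] with T hT hT2δ hT1 hT8
  have hT0 : (0:ℝ) < T := lt_of_lt_of_le one_pos hT1
  have h8 : 8 * δ ≤ c * T := by
    rw [div_le_iff₀ hc] at hT8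
    linarith [hT8]
  -- the compact rectangle
  set Q : Set ℂ := {z : ℂ | σ₁ ≤ z.re ∧ z.re ≤ σ₂ ∧ 0 ≤ z.im ∧ z.im ≤ T} with hQdef
  have hQc : IsCompact Q := by
    have hcl : IsClosed Q := by
      have : Q = Complex.re ⁻¹' Set.Icc σ₁ σ₂ ∩ Complex.im ⁻¹' Set.Icc 0 T := by
        ext z
        simp [hQdef, Set.mem_Icc, and_assoc]
      rw [this]
      exact (isClosed_Icc.preimage Complex.continuous_re).inter
        (isClosed_Icc.preimage Complex.continuous_im)
    have hbd : Bornology.IsBounded Q := by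
      apply Bornology.IsBounded.subset (Metric.isBounded_closedBall
        (x := (0:ℂ)) (r := |σ₁| + |σ₂| + T))
      intro z hz
      obtain ⟨ha1, ha2, ha3, ha4⟩ := hz
      rw [Metric.mem_closedBall, dist_zero_right]
      calc ‖z‖ ≤ |z.re| + |z.im| := Complex.norm_le_abs_re_add_abs_im z
      _ ≤ (|σ₁| + |σ₂|) + T := by
          apply add_le_add
          · rw [abs_le]
            constructor
            · linarith [neg_abs_le σ₁, le_abs_self σ₁, abs_nonneg σ₂]
            · linarith [le_abs_self σ₂, abs_nonneg σ₁]
          · rw [abs_le]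
            constructor <;> linarith
      _ = |σ₁| + |σ₂| + T := by ring
    exact Metric.isCompact_of_isClosed_isBounded hcl hbd
  have hQU : Q ⊆ U := fun z hz => ⟨lt_of_lt_of_le h1 hz.1, lt_of_le_of_lt hz.2.1 h2⟩
  -- the zero set is finite
  set Z : Set ℂ := {ρ : ℂ | φ ρ = 0 ∧ σ₁ ≤ ρ.re ∧ ρ.re ≤ σ₂ ∧ 0 ≤ ρ.im ∧ ρ.im ≤ T} with hZdef
  have hZQ : Z = {z ∈ Q | φ z = 0} := by
    ext z
    simp only [hZdef, hQdef, Set.mem_setOf_eq, Set.mem_sep_iff]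
    tauto
  have hfin : Z.Finite := by
    rw [hZQ]
    exact aux_finite_zeros hUo hUc hφ hz₀U hz₀' hQc hQU
  set F : Finset ℂ := hfin.toFinset with hFdef
  set n : ℕ := F.card with hndef
  have hcount : zeroCount φ σ₁ σ₂ T = n := by
    rw [zeroCount, hndef, hFdef, Set.ncard_eq_toFinset_card _ hfin]
  -- covering estimate
  have hcover : S ∩ Set.Icc δ (T - δ) ⊆ ⋃ ρ ∈ F, Set.Icc (ρ.im - δ) (ρ.im + δ) := by
    rintro τ ⟨hτS, hτl, hτr⟩
    obtain ⟨ρ, hρ0, hρ1, hρ2, hρ3, hρ4⟩ := key τ hτS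
    have hρZ : ρ ∈ F := by
      rw [hFdef, Set.Finite.mem_toFinset]
      exact ⟨hρ0, hρ1, hρ2, by linarith, by linarith⟩
    exact Set.mem_biUnion hρZ ⟨by linarith, by linarith⟩
  have hmeas1 : MeasureTheory.volume (S ∩ Set.Icc δ (T - δ)) ≤
      ENNReal.ofReal ((n:ℝ) * (2 * δ)) := by
    calc MeasureTheory.volume (S ∩ Set.Icc δ (T - δ))
        ≤ MeasureTheory.volume (⋃ ρ ∈ F, Set.Icc (ρ.im - δ) (ρ.im + δ)) :=
          measure_mono hcover
      _ ≤ ∑ ρ ∈ F, MeasureTheory.volume (Set.Icc (ρ.im - δ) (ρ.im + δ)) :=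
          measure_biUnion_finset_le F _
      _ = ∑ ρ ∈ F, ENNReal.ofReal (2 * δ) := by
          apply Finset.sum_congr rfl
          intro ρ _
          rw [Real.volume_Icc]
          congr 1
          ring
      _ = (n : ENNReal) * ENNReal.ofReal (2 * δ) := by
          rw [Finset.sum_const, nsmul_eq_mul, hndef]
      _ = ENNReal.ofReal ((n:ℝ) * (2 * δ)) := by
          rw [← ENNReal.ofReal_natCast n, ← ENNReal.ofReal_mul (Nat.cast_nonneg n)]
  have hsplit : MeasureTheory.volume (S ∩ Set.Icc 0 T) ≤
      ENNReal.ofReal (δ + δ + (n:ℝ) * (2 * δ)) := by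
    have hsub : S ∩ Set.Icc 0 T ⊆
        (Set.Icc 0 δ ∪ Set.Icc (T - δ) T) ∪ (S ∩ Set.Icc δ (T - δ)) := by
      rintro τ ⟨hτS, hτ0, hτT⟩
      by_cases hl : τ ≤ δ
      · exact Or.inl (Or.inl ⟨hτ0, hl⟩)
      by_cases hr : T - δ ≤ τ
      · exact Or.inl (Or.inr ⟨hr, hτT⟩)
      · exact Or.inr ⟨hτS, le_of_not_ge hl, le_of_not_ge hr⟩
    calc MeasureTheory.volume (S ∩ Set.Icc 0 T)
        ≤ MeasureTheory.volume ((Set.Icc 0 δ ∪ Set.Icc (T - δ) T) ∪ (S ∩ Set.Icc δ (T - δ))) :=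
          measure_mono hsub
      _ ≤ (MeasureTheory.volume (Set.Icc 0 δ) + MeasureTheory.volume (Set.Icc (T - δ) T))
            + MeasureTheory.volume (S ∩ Set.Icc δ (T - δ)) :=
          le_trans (measure_union_le _ _) (add_le_add_left (measure_union_le _ _) _)
      _ ≤ ENNReal.ofReal δ + ENNReal.ofReal δ + ENNReal.ofReal ((n:ℝ) * (2 * δ)) := by
          rw [Real.volume_Icc, Real.volume_Icc, sub_zero, sub_sub_cancel]
          exact add_le_add (le_refl _) hmeas1
      _ = ENNReal.ofReal (δ + δ + (n:ℝ) * (2 * δ)) := by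
          rw [← ENNReal.ofReal_add hδ.le hδ.le, ← ENNReal.ofReal_add (by linarith) (mul_nonneg (Nat.cast_nonneg n) (by linarith))]
  -- convert to reals
  have hkey : c / 2 * T < δ + δ + (n:ℝ) * (2 * δ) := by
    have h1' : c / 2 * T < (MeasureTheory.volume (S ∩ Set.Icc 0 T)).toReal := by
      rw [← lt_div_iff₀ hT0]
      exact hT
    have h2' : (MeasureTheory.volume (S ∩ Set.Icc 0 T)).toReal ≤ δ + δ + (n:ℝ) * (2 * δ) := by
      have := ENNReal.toReal_mono (ENNReal.ofReal_ne_top) hsplit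
      rwa [ENNReal.toReal_ofReal (add_nonneg (add_nonneg hδ.le hδ.le) (mul_nonneg (Nat.cast_nonneg n) (by linarith)))] at this
    linarith
  rw [hcount]
  rw [div_mul_eq_mul_div, div_le_iff₀ (by linarith : (0:ℝ) < 8 * δ)]
  -- c * T ≤ n * (n * (8 * δ))?  goal: c * T ≤ ↑n * (8 * δ)
  nlinarith [hkey, h8, hδ, hT0]
end

section
/- The function 1/(2^s − 1) is not universal in any strip D(a,b) ⊂ {Re s > 0}: there exist a compact set K ⊂ D(a,b) with connected complement, a non-vanishing continuous function f on K holomorphic in the interior, and ε > 0 such that no real τ satisfies sup_{s∈K} |1/(2^{s+iτ} − 1) − f(s)| < ε. -/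
open Complex

/-- The function `1/(2^s - 1)` is not universal in any strip `D(a,b) ⊆ {Re s > 0}`:
there is a compact set `K` with connected complement inside the strip, a non-vanishing
admissible target function `f`, and an `ε > 0` such that no vertical shift approximates
`f` within `ε` on `K`. -/
theorem one_div_two_pow_sub_one_not_universal (a b : ℝ) (ha : 0 ≤ a) (hab : a < b) :
    ∃ K : Set ℂ, IsCompact K ∧ K ⊆ {s : ℂ | a < s.re ∧ s.re < b} ∧ IsConnected Kᶜ ∧
      ∃ f : ℂ → ℂ, ContinuousOn f K ∧ DifferentiableOn ℂ f (interior K) ∧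
        (∀ s ∈ K, f s ≠ 0) ∧
        ∃ ε : ℝ, 0 < ε ∧ ∀ τ : ℝ, ∃ s ∈ K,
          ε ≤ ‖1 / ((2 : ℂ) ^ (s + τ * Complex.I) - 1) - f s‖ := by
  set c : ℝ := (a + b) / 2 with hc
  have hac : a < c := by simp [hc]; linarith
  have hcb : c < b := by simp [hc]; linarith
  have hc0 : 0 < c := lt_of_le_of_lt ha hac
  have h2c : (1 : ℝ) < (2 : ℝ) ^ c := Real.one_lt_rpow_iff_of_pos (by norm_num) |>.2 (Or.inl ⟨by norm_num, hc0⟩)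
  set B : ℝ := 1 / ((2 : ℝ) ^ c - 1) with hB
  have hBpos : 0 < B := div_pos one_pos (by linarith)
  refine ⟨{(c : ℂ)}, isCompact_singleton, ?_, ?_, fun _ => ((B + 2 : ℝ) : ℂ), continuousOn_const,
    differentiableOn_const _, fun s _ => ?_, 1, one_pos, fun τ => ⟨(c : ℂ), rfl, ?_⟩⟩
  · rintro s rfl
    simp [hac, hcb]
  · exact isConnected_compl_singleton_of_one_lt_rank (by rw [rank_real_complex]; norm_num) _
  · simp only [ne_eq, Complex.ofReal_eq_zero]
    positivity
  · -- key estimate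
    have hre : ((c : ℂ) + τ * Complex.I).re = c := by simp
    have habs : ‖(2 : ℂ) ^ ((c : ℂ) + τ * Complex.I)‖ = (2 : ℝ) ^ c := by
      rw [show ((2 : ℂ)) = ((2 : ℝ) : ℂ) by norm_num,
        Complex.norm_cpow_eq_rpow_re_of_pos (by norm_num), hre]
    have hlow : (2 : ℝ) ^ c - 1 ≤ ‖(2 : ℂ) ^ ((c : ℂ) + τ * Complex.I) - 1‖ := by
      calc (2 : ℝ) ^ c - 1 = ‖(2 : ℂ) ^ ((c : ℂ) + τ * Complex.I)‖ - ‖(1 : ℂ)‖ := by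
            rw [habs]; simp
        _ ≤ _ := norm_sub_norm_le _ _
    have hne : ((2 : ℂ) ^ ((c : ℂ) + τ * Complex.I) - 1) ≠ 0 := by
      intro h
      rw [h, norm_zero] at hlow
      linarith
    have hub : ‖1 / ((2 : ℂ) ^ ((c : ℂ) + τ * Complex.I) - 1)‖ ≤ B := by
      rw [norm_div, norm_one, hB]
      apply div_le_div_of_nonneg_left (by norm_num) (by linarith) hlow
    calc (1 : ℝ) ≤ (B + 2) - B := by linarith
      _ ≤ ‖((B + 2 : ℝ) : ℂ)‖ - ‖1 / ((2 : ℂ) ^ ((c : ℂ) + τ * Complex.I) - 1)‖ := by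
          rw [Complex.norm_real, Real.norm_of_nonneg (by linarith)]
          linarith
      _ ≤ ‖1 / ((2 : ℂ) ^ ((c : ℂ) + τ * Complex.I) - 1) - ((B + 2 : ℝ) : ℂ)‖ := by
          rw [norm_sub_rev]
          exact norm_sub_norm_le _ _
end

section
/- Shifts universality principle: Let φ be holomorphic on D(σ₁,σ₂) = {s : σ₁ < Re s < σ₂} and universal there. Let K be a compact subset of D(σ₁,σ₂) with connected complement, let λ₁,...,λ_r be complex numbers such that the translates K_j = {s + λ_j : s ∈ K} are pairwise disjoint subsets of D(σ₁,σ₂), and suppose the union K₁ ∪ ... ∪ K_r has connected complement. Then the functions φ_j(s) = φ(s + λ_j), 1 ≤ j ≤ r, are jointly universal on K: for all non-vanishing f_j ∈ H^c(K) (continuous on K, holomorphic in the interior) and every ε > 0, the set of τ ∈ [0,T] with sup_{s∈K} |φ_j(s+iτ) − f_j(s)| < ε simultaneously for all j has positive lower density. -/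
open Complex Filter MeasureTheory Set
open Topology

/-- Shifts universality principle (Kaczorowski–Laurinčikas–Steuding): if `φ` is
universal in the strip `D(σ₁,σ₂)` and the translates `K + λⱼ` of a compact set `K`
with connected complement are pairwise disjoint subsets of the strip whose union has
connected complement, then the shifts `φ(· + λⱼ)` are jointly universal on `K`. -/
theorem shifts_universality_principle (σ₁ σ₂ : ℝ) (hσ : σ₁ < σ₂) (φ : ℂ → ℂ)
    (hφ : DifferentiableOn ℂ φ {s : ℂ | σ₁ < s.re ∧ s.re < σ₂})
    (hu : ∀ K : Set ℂ, IsCompact K → K ⊆ {s : ℂ | σ₁ < s.re ∧ s.re < σ₂} →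
      IsConnected Kᶜ → ∀ f : ℂ → ℂ, ContinuousOn f K →
      DifferentiableOn ℂ f (interior K) → (∀ s ∈ K, f s ≠ 0) → ∀ ε : ℝ, 0 < ε →
      0 < lowerDensity {τ : ℝ | ∀ s ∈ K, ‖φ (s + τ * Complex.I) - f s‖ < ε})
    (K : Set ℂ) (hK : IsCompact K) (hKc : IsConnected Kᶜ)
    (r : ℕ) (lam : Fin r → ℂ)
    (hsub : ∀ j : Fin r, (fun s => s + lam j) '' K ⊆ {s : ℂ | σ₁ < s.re ∧ s.re < σ₂})
    (hdisj : ∀ i j : Fin r, i ≠ j →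
      Disjoint ((fun s => s + lam i) '' K) ((fun s => s + lam j) '' K))
    (hUc : IsConnected (⋃ j : Fin r, (fun s => s + lam j) '' K)ᶜ)
    (f : Fin r → ℂ → ℂ) (hfc : ∀ j, ContinuousOn (f j) K)
    (hfd : ∀ j, DifferentiableOn ℂ (f j) (interior K))
    (hfnv : ∀ j, ∀ s ∈ K, f j s ≠ 0) (ε : ℝ) (hε : 0 < ε) :
    0 < lowerDensity {τ : ℝ | ∀ j : Fin r, ∀ s ∈ K,
      ‖φ (s + lam j + τ * Complex.I) - f j s‖ < ε} := by
  classical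
  set Kj : Fin r → Set ℂ := fun j => (fun s => s + lam j) '' K with hKjdef
  set U : Set ℂ := ⋃ j, Kj j with hUdef
  set F : Fin r → ℂ → ℂ := fun j z => f j (z - lam j) with hFdef
  set g : ℂ → ℂ := fun z => if h : ∃ j, z ∈ Kj j then F h.choose z else 1 with hgdef
  have hFval : ∀ j, ∀ s, F j (s + lam j) = f j s := by
    intro j s; simp [hFdef]
  have hmem : ∀ j, ∀ z ∈ Kj j, g z = F j z := by
    intro j z hz
    have h : ∃ j, z ∈ Kj j := ⟨j, hz⟩
    have hji : h.choose = j := by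
      by_contra hne
      exact (Set.disjoint_left.mp (hdisj _ _ hne) h.choose_spec) hz
    simp only [hgdef, dif_pos h, hji]
  have hKjc : ∀ j, IsCompact (Kj j) := fun j =>
    hK.image (by fun_prop)
  have hKjcl : ∀ j, IsClosed (Kj j) := fun j => (hKjc j).isClosed
  have hUcomp : IsCompact U := isCompact_iUnion hKjc
  have hUsub : U ⊆ {s : ℂ | σ₁ < s.re ∧ s.re < σ₂} := iUnion_subset hsub
  have hFc : ∀ j, ContinuousOn (F j) (Kj j) := by
    intro j
    apply (hfc j).comp (by fun_prop)
    rintro z ⟨s, hs, rfl⟩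
    simpa using hs
  -- the open "separation" neighborhood
  have hVopen : ∀ i : Fin r, IsOpen (⋂ j ∈ ({i}ᶜ : Set (Fin r)), (Kj j)ᶜ) := by
    intro i
    exact (Set.toFinite _).isOpen_biInter (fun j _ => (hKjcl j).isOpen_compl)
  have hVmem : ∀ i : Fin r, ∀ z ∈ Kj i, z ∈ ⋂ j ∈ ({i}ᶜ : Set (Fin r)), (Kj j)ᶜ := by
    intro i z hz
    simp only [Set.mem_iInter, Set.mem_compl_iff]
    intro j hj
    exact fun hzj => (Set.disjoint_left.mp (hdisj j i (by simpa using hj)) hzj) hz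
  have hVsub : ∀ i : Fin r, U ∩ (⋂ j ∈ ({i}ᶜ : Set (Fin r)), (Kj j)ᶜ) ⊆ Kj i := by
    intro i w hw
    obtain ⟨j, hwj⟩ := mem_iUnion.mp hw.1
    have hwV := hw.2
    by_cases hji : j = i
    · exact hji ▸ hwj
    · exact absurd hwj (by simpa using (Set.mem_iInter₂.mp hwV j hji))
  have hgc : ContinuousOn g U := by
    intro z hz
    obtain ⟨i, hzi⟩ := mem_iUnion.mp hz
    have hVnhds : (⋂ j ∈ ({i}ᶜ : Set (Fin r)), (Kj j)ᶜ) ∈ 𝓝 z :=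
      (hVopen i).mem_nhds (hVmem i z hzi)
    have hUV : U ∩ (⋂ j ∈ ({i}ᶜ : Set (Fin r)), (Kj j)ᶜ) ∈ nhdsWithin z U :=
      Filter.inter_mem self_mem_nhdsWithin (mem_nhdsWithin_of_mem_nhds hVnhds)
    have hKimem : Kj i ∈ nhdsWithin z U := Filter.mem_of_superset hUV (hVsub i)
    have h2 : ContinuousWithinAt (F i) U z := (hFc i z hzi).mono_of_mem_nhdsWithin hKimem
    refine h2.congr_of_eventuallyEq ?_ (hmem i z hzi)
    filter_upwards [hKimem] with w hw using hmem i w hw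
  have hgd : DifferentiableOn ℂ g (interior U) := by
    intro z hz
    obtain ⟨i, hzi⟩ := mem_iUnion.mp (interior_subset hz)
    set W : Set ℂ := interior U ∩ (⋂ j ∈ ({i}ᶜ : Set (Fin r)), (Kj j)ᶜ) with hWdef
    have hWopen : IsOpen W := isOpen_interior.inter (hVopen i)
    have hzW : z ∈ W := ⟨hz, hVmem i z hzi⟩
    have hWsub : W ⊆ Kj i := fun w hw => hVsub i ⟨interior_subset hw.1, hw.2⟩
    have hint : z - lam i ∈ interior K := by
      rw [mem_interior_iff_mem_nhds]
      have hpre : IsOpen ((fun s => s + lam i) ⁻¹' W) := hWopen.preimage (by fun_prop)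
      refine Filter.mem_of_superset (hpre.mem_nhds ?_) ?_
      · simp [Set.mem_preimage, hzW]
      · intro w hw
        obtain ⟨s, hs, hse⟩ := hWsub hw
        rwa [← add_right_cancel hse]
    have hdiff : DifferentiableAt ℂ (F i) z := by
      have h1 : DifferentiableAt ℂ (f i) (z - lam i) :=
        (hfd i _ hint).differentiableAt (isOpen_interior.mem_nhds hint)
      exact h1.comp z ((differentiable_id.sub_const (lam i)).differentiableAt)
    have heq : g =ᶠ[nhds z] F i := by
      filter_upwards [hWopen.mem_nhds hzW] with w hw using hmem i w (hWsub hw)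
    exact (hdiff.congr_of_eventuallyEq heq).differentiableWithinAt
  have hgnv : ∀ z ∈ U, g z ≠ 0 := by
    intro z hz
    obtain ⟨i, s, hs, rfl⟩ := mem_iUnion.mp hz
    rw [hmem i _ ⟨s, hs, rfl⟩, hFval]
    exact hfnv i s hs
  have hres := hu U hUcomp hUsub hUc g hgc hgd hgnv ε hε
  have hset : {τ : ℝ | ∀ s ∈ U, ‖φ (s + τ * Complex.I) - g s‖ < ε} =
      {τ : ℝ | ∀ j : Fin r, ∀ s ∈ K, ‖φ (s + lam j + τ * Complex.I) - f j s‖ < ε} := by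
    ext τ
    simp only [Set.mem_setOf_eq]
    constructor
    · intro h j s hs
      have hz : s + lam j ∈ U := mem_iUnion.mpr ⟨j, ⟨s, hs, rfl⟩⟩
      have := h _ hz
      rwa [hmem j _ ⟨s, hs, rfl⟩, hFval] at this
    · intro h z hz
      obtain ⟨j, s, hs, rfl⟩ := mem_iUnion.mp hz
      rw [hmem j _ ⟨s, hs, rfl⟩, hFval]
      exact h j s hs
  rwa [hset] at hres
end

section
/- Kronecker–Weyl theorem: If α₁,...,α_m are real numbers linearly independent over ℚ, then for any real numbers θ₁,...,θ_m and any ε > 0, the set of τ ∈ [0,T] with ‖τα_k − θ_k‖ < ε for all 1 ≤ k ≤ m (where ‖x‖ denotes the distance from x to the nearest integer) has positive density, i.e., lim_{T→∞} (1/T) meas{τ ∈ [0,T] : ‖τα_k − θ_k‖ < ε, 1 ≤ k ≤ m} > 0. -/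
open Filter MeasureTheory

/-- The distance from a real number to the nearest integer. -/
noncomputable def distNearestInt (x : ℝ) : ℝ := |x - round x|

noncomputable section

namespace KW

abbrev T1 := AddCircle (1:ℝ)
abbrev G (m : ℕ) := Fin m → T1

variable {m : ℕ}

instance : IsProbabilityMeasure (volume : Measure (G m)) := by
  constructor
  rw [volume_pi, Measure.pi_univ]
  simp [AddCircle.measure_univ]

/-- character -/
def e (n : Fin m → ℤ) : C(G m, ℂ) :=
  ⟨fun x => ∏ k, fourier (n k) (x k), by fun_prop⟩

lemma e_apply (n : Fin m → ℤ) (x : G m) : e n x = ∏ k, fourier (n k) (x k) := rfl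

lemma e_zero : e (0 : Fin m → ℤ) = 1 := by
  ext x; simp [e_apply, fourier_zero]

lemma e_mul (n n' : Fin m → ℤ) : e n * e n' = e (n + n') := by
  ext x
  simp only [ContinuousMap.mul_apply, e_apply, ← Finset.prod_mul_distrib]
  refine Finset.prod_congr rfl fun k _ => ?_
  rw [Pi.add_apply, fourier_add]

lemma e_star (n : Fin m → ℤ) : star (e n) = e (-n) := by
  ext x
  simp only [ContinuousMap.star_apply, e_apply, star_prod]
  refine Finset.prod_congr rfl fun k _ => ?_
  rw [Pi.neg_apply, fourier_neg]
  rfl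

/-- integral of a nontrivial character vanishes -/
lemma integral_fourier {n : ℤ} (hn : n ≠ 0) : ∫ x : T1, fourier n x = 0 := by
  rw [← AddCircle.intervalIntegral_preimage (1:ℝ) 0 (fun x => fourier n x), zero_add]
  have h : ∀ x : ℝ, (fourier n (x : T1) : ℂ) = Complex.exp ((2 * Real.pi * n * Complex.I) * x) := by
    intro x
    rw [fourier_coe_apply]
    push_cast
    ring_nf
  rw [intervalIntegral.integral_congr (fun x _ => h x)]
  have hc : (2 * (Real.pi:ℂ) * (n:ℂ) * Complex.I) ≠ 0 := by
    apply mul_ne_zero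
    apply mul_ne_zero
    · exact mul_ne_zero two_ne_zero (Complex.ofReal_ne_zero.2 Real.pi_ne_zero)
    · exact_mod_cast (Int.cast_ne_zero (α := ℂ)).2 hn
    · exact Complex.I_ne_zero
  rw [integral_exp_mul_complex hc]
  have h1 : (2 * (Real.pi:ℂ) * (n:ℂ) * Complex.I) * (1:ℝ) = (n:ℂ) * (2 * Real.pi * Complex.I) := by
    push_cast; ring
  rw [h1, Complex.exp_int_mul_two_pi_mul_I]
  simp

lemma integral_e {n : Fin m → ℤ} (hn : n ≠ 0) : ∫ x : G m, e n x = 0 := by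
  have : ∫ x : G m, e n x = ∏ k, ∫ x : T1, fourier (n k) x := by
    simpa [e_apply, volume_pi] using
      MeasureTheory.integral_fintype_prod_eq_prod (𝕜 := ℂ)
        (fun k (x : T1) => (fourier (n k) x : ℂ))
  rw [this]
  obtain ⟨k, hk⟩ : ∃ k, n k ≠ 0 := by
    by_contra h; push_neg at h; exact hn (funext h)
  exact Finset.prod_eq_zero (Finset.mem_univ k) (integral_fourier hk)


variable (α θ : Fin m → ℝ)

def charSpan : Submodule ℂ C(G m, ℂ) := Submodule.span ℂ (Set.range (e (m := m)))

lemma charSpan_mul_mem {a b : C(G m, ℂ)} (ha : a ∈ charSpan (m := m))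
    (hb : b ∈ charSpan (m := m)) : a * b ∈ charSpan (m := m) := by
  have h : charSpan (m := m) * charSpan (m := m) ≤ charSpan (m := m) := by
    rw [charSpan, Submodule.span_mul_span]
    apply Submodule.span_le.2
    rintro x hx
    rw [Set.mem_mul] at hx
    obtain ⟨u, ⟨nu, rfl⟩, v, ⟨nv, rfl⟩, rfl⟩ := hx
    exact Submodule.subset_span ⟨nu + nv, (e_mul nu nv).symm⟩
  exact h (Submodule.mul_mem_mul ha hb)

def charAlg : StarSubalgebra ℂ C(G m, ℂ) where
  carrier := charSpan (m := m)
  add_mem' := fun ha hb => add_mem ha hb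
  zero_mem' := zero_mem _
  mul_mem' := fun ha hb => charSpan_mul_mem ha hb
  one_mem' := e_zero (m := m) ▸ Submodule.subset_span ⟨0, rfl⟩
  algebraMap_mem' := fun c => by
    have h1 : (1 : C(G m, ℂ)) ∈ charSpan (m := m) :=
      e_zero (m := m) ▸ Submodule.subset_span ⟨0, rfl⟩
    simpa [Algebra.algebraMap_eq_smul_one] using Submodule.smul_mem _ c h1
  star_mem' := by
    intro a ha
    induction ha using Submodule.span_induction with
    | mem x hx =>
        obtain ⟨n, rfl⟩ := hx
        exact e_star n ▸ Submodule.subset_span ⟨-n, rfl⟩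
    | zero => simp only [star_zero]; exact zero_mem (charSpan (m := m))
    | add x y _ _ hx hy => rw [star_add]; exact add_mem hx hy
    | smul c x _ hx => rw [star_smul]; exact Submodule.smul_mem _ _ hx

lemma charAlg_separates : (charAlg (m := m)).SeparatesPoints := by
  intro x y hxy
  obtain ⟨k, hk⟩ : ∃ k, x k ≠ y k := by
    by_contra h; push_neg at h; exact hxy (funext h)
  refine ⟨_, ⟨e (Pi.single k 1 : Fin m → ℤ), Submodule.subset_span ⟨_, rfl⟩, rfl⟩, ?_⟩
  simp only [e_apply]
  have hprod : ∀ z : G m, ∏ j, fourier ((Pi.single k 1 : Fin m → ℤ) j) (z j)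
      = fourier 1 (z k) := by
    intro z
    rw [Finset.prod_eq_single k (fun j _ hj => by simp [Pi.single_eq_of_ne hj, fourier_zero])
      (by simp)]
    simp
  rw [hprod, hprod]
  simp only [fourier_one]
  intro h
  exact hk (AddCircle.injective_toCircle one_ne_zero (Circle.ext h))


/-- the flow -/
def ψ (τ : ℝ) : G m := fun k => ((τ * α k - θ k : ℝ) : T1)

lemma continuous_ψ : Continuous (ψ (m := m) α θ) := by
  apply continuous_pi
  intro k
  exact (AddCircle.continuous_mk' 1).comp (by fun_prop)

/-- average of exponential tends to zero -/
lemma avg_exp_tendsto {c : ℝ} (hc : c ≠ 0) :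
    Tendsto (fun T : ℝ => (∫ τ in (0:ℝ)..T, Complex.exp ((c * Complex.I) * τ)) / T)
      atTop (nhds 0) := by
  have hc' : (c : ℂ) * Complex.I ≠ 0 :=
    mul_ne_zero (Complex.ofReal_ne_zero.2 hc) Complex.I_ne_zero
  refine squeeze_zero_norm' (a := fun T => (2 / ‖(c:ℂ) * Complex.I‖) / T) ?_ ?_
  · filter_upwards [eventually_ge_atTop (1:ℝ)] with T hT
    have hT0 : (0:ℝ) < T := by linarith
    rw [integral_exp_mul_complex hc', norm_div, norm_div, Complex.norm_real,
      Real.norm_eq_abs, abs_of_pos hT0]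
    gcongr
    calc ‖Complex.exp ((c:ℂ) * Complex.I * T) - Complex.exp ((c:ℂ) * Complex.I * 0)‖
        ≤ ‖Complex.exp ((c:ℂ) * Complex.I * T)‖ + ‖Complex.exp ((c:ℂ) * Complex.I * 0)‖ :=
          norm_sub_le _ _
      _ ≤ 2 := by
          rw [mul_zero, Complex.exp_zero]
          have h1 : ‖Complex.exp ((c:ℂ) * Complex.I * T)‖ = 1 := by
            rw [mul_comm ((c:ℂ)) Complex.I, mul_assoc, ← Complex.ofReal_mul,
              mul_comm Complex.I _, Complex.norm_exp_ofReal_mul_I]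
          rw [h1, norm_one]; norm_num
  · exact tendsto_const_nhds.div_atTop tendsto_id


lemma e_psi (n : Fin m → ℤ) (τ : ℝ) :
    e n (ψ α θ τ) =
      Complex.exp ((-(2 * Real.pi * ∑ k, (n k : ℝ) * θ k) : ℝ) * Complex.I) *
        Complex.exp (((2 * Real.pi * ∑ k, (n k : ℝ) * α k : ℝ) * Complex.I) * τ) := by
  simp only [e_apply, ψ, fourier_coe_apply]
  rw [← Complex.exp_sum, ← Complex.exp_add]
  congr 1
  push_cast
  rw [Finset.sum_congr rfl (fun k _ => by ring :
    ∀ k ∈ Finset.univ, 2 * (Real.pi:ℂ) * Complex.I * (n k) * (τ * α k - θ k) / 1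
      = (2 * (Real.pi:ℂ) * Complex.I * τ) * ((n k) * α k)
        - (2 * (Real.pi:ℂ) * Complex.I) * ((n k) * θ k))]
  rw [Finset.sum_sub_distrib, ← Finset.mul_sum, ← Finset.mul_sum]
  ring

lemma avg_e_tendsto (n : Fin m → ℤ) (hc : (∑ k, (n k : ℝ) * α k) ≠ 0) :
    Tendsto (fun T : ℝ => (∫ τ in (0:ℝ)..T, e n (ψ α θ τ)) / T) atTop (nhds 0) := by
  have hc2 : (2 * Real.pi * ∑ k, (n k : ℝ) * α k) ≠ 0 :=
    mul_ne_zero (mul_ne_zero two_ne_zero Real.pi_ne_zero) hc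
  have h := (avg_exp_tendsto hc2).const_mul
    (Complex.exp ((-(2 * Real.pi * ∑ k, (n k : ℝ) * θ k) : ℝ) * Complex.I))
  rw [mul_zero] at h
  refine h.congr fun T => ?_
  rw [intervalIntegral.integral_congr (fun τ _ => e_psi α θ n τ),
    intervalIntegral.integral_const_mul, mul_div_assoc]


lemma integrable_cm (f : C(G m, ℂ)) : Integrable f :=
  f.continuous.integrable_of_hasCompactSupport (HasCompactSupport.of_compactSpace _)

lemma intInt (f : C(G m, ℂ)) (a b : ℝ) :
    IntervalIntegrable (fun τ => f (ψ α θ τ)) volume a b :=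
  (f.continuous.comp (continuous_ψ α θ)).intervalIntegrable a b

lemma avg_tendsto_span (hline : ∀ n : Fin m → ℤ, n ≠ 0 → (∑ k, (n k : ℝ) * α k) ≠ 0)
    {p : C(G m, ℂ)} (hp : p ∈ charSpan (m := m)) :
    Tendsto (fun T : ℝ => (∫ τ in (0:ℝ)..T, p (ψ α θ τ)) / T) atTop (nhds (∫ x, p x)) := by
  induction hp using Submodule.span_induction with
  | mem p hp =>
    obtain ⟨n, rfl⟩ := hp
    by_cases hn : n = 0
    · subst hn
      rw [e_zero]
      have h1 : (∫ x : G m, (1 : C(G m, ℂ)) x) = 1 := by simp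
      rw [h1]
      refine Tendsto.congr' ?_ (tendsto_const_nhds : Tendsto (fun _ : ℝ => (1:ℂ)) atTop (nhds 1))
      filter_upwards [eventually_ge_atTop (1:ℝ)] with T hT
      have hT0 : (T:ℂ) ≠ 0 := by exact_mod_cast (by linarith : T ≠ 0)
      simp only [ContinuousMap.one_apply, intervalIntegral.integral_const, smul_eq_mul, mul_one,
        sub_zero, Complex.ofReal_sub, Complex.ofReal_zero]
      field_simp
      rw [Complex.real_smul, mul_one]
    · have h0 : (∫ x : G m, e n x) = 0 := integral_e hn
      rw [h0]
      exact avg_e_tendsto α θ n (hline n hn)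
  | zero => simp only [ContinuousMap.zero_apply, integral_zero, intervalIntegral.integral_zero, zero_div]; exact tendsto_const_nhds
  | add x y hx hy ihx ihy =>
    have h1 : (∫ z : G m, (x + y) z) = (∫ z : G m, x z) + ∫ z : G m, y z := by
      simp only [ContinuousMap.add_apply]
      exact integral_add (integrable_cm x) (integrable_cm y)
    rw [h1]
    refine (ihx.add ihy).congr fun T => ?_
    simp only [ContinuousMap.add_apply]
    rw [intervalIntegral.integral_add (intInt α θ x 0 T) (intInt α θ y 0 T), add_div]
  | smul c x hx ih =>
    have h1 : (∫ z : G m, (c • x) z) = c • ∫ z : G m, x z := by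
      simp only [ContinuousMap.smul_apply]
      exact integral_smul c _
    rw [h1]
    refine (ih.const_smul c).congr fun T => ?_
    simp only [ContinuousMap.smul_apply]
    rw [intervalIntegral.integral_smul, smul_eq_mul, smul_eq_mul, mul_div_assoc]


lemma avg_tendstoC (hline : ∀ n : Fin m → ℤ, n ≠ 0 → (∑ k, (n k : ℝ) * α k) ≠ 0)
    (f : C(G m, ℂ)) :
    Tendsto (fun T : ℝ => (∫ τ in (0:ℝ)..T, f (ψ α θ τ)) / T) atTop (nhds (∫ x, f x)) := by
  rw [Metric.tendsto_atTop]
  intro η hη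
  have hf : f ∈ closure ((charAlg (m := m) : Set C(G m, ℂ))) := by
    have h := ContinuousMap.starSubalgebra_topologicalClosure_eq_top_of_separatesPoints
      (charAlg (m := m)) (charAlg_separates)
    have : f ∈ (charAlg (m := m)).topologicalClosure := h ▸ trivial
    exact this
  obtain ⟨p, hpA, hfp⟩ := Metric.mem_closure_iff.1 hf (η/4) (by linarith)
  obtain ⟨N, hN⟩ := (Metric.tendsto_atTop.1 (avg_tendsto_span α θ hline hpA)) (η/4) (by linarith)
  refine ⟨max N 1, fun T hT => ?_⟩
  have hT1 : (1:ℝ) ≤ T := le_trans (le_max_right _ _) hT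
  have hTN : N ≤ T := le_trans (le_max_left _ _) hT
  have hT0 : (0:ℝ) < T := by linarith
  have key1 : dist ((∫ τ in (0:ℝ)..T, f (ψ α θ τ)) / T)
      ((∫ τ in (0:ℝ)..T, p (ψ α θ τ)) / T) ≤ η/4 := by
    rw [dist_eq_norm, div_sub_div_same, ← intervalIntegral.integral_sub
      (intInt α θ f 0 T) (intInt α θ p 0 T), norm_div]
    have hb : ‖∫ τ in (0:ℝ)..T, (f (ψ α θ τ) - p (ψ α θ τ))‖ ≤ (η/4) * |T - 0| := by
      apply intervalIntegral.norm_integral_le_of_norm_le_const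
      intro x _
      have : f (ψ α θ x) - p (ψ α θ x) = (f - p) (ψ α θ x) := rfl
      rw [this]
      calc ‖(f - p) (ψ α θ x)‖ ≤ ‖f - p‖ := ContinuousMap.norm_coe_le_norm _ _
        _ ≤ η/4 := by rw [← dist_eq_norm]; exact le_of_lt hfp
    rw [sub_zero, abs_of_pos hT0] at hb
    have hTn : ‖((T:ℝ):ℂ)‖ = T := by
      rw [Complex.norm_real, Real.norm_eq_abs, abs_of_pos hT0]
    rw [hTn]
    calc ‖∫ x in (0:ℝ)..T, (f (ψ α θ x) - p (ψ α θ x))‖ / T ≤ (η/4 * T) / T := by gcongr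
      _ = η/4 := by rw [mul_div_assoc, div_self (ne_of_gt hT0), mul_one]
  have key3 : dist (∫ x, p x) (∫ x, f x) ≤ η/4 := by
    rw [dist_eq_norm, ← integral_sub (integrable_cm p) (integrable_cm f)]
    calc ‖∫ x, (p x - f x)‖ ≤ (η/4) * (volume (Set.univ : Set (G m))).toReal := by
          apply norm_integral_le_of_norm_le_const
          filter_upwards with x
          have : p x - f x = (p - f) x := rfl
          rw [this]
          calc ‖(p - f) x‖ ≤ ‖p - f‖ := ContinuousMap.norm_coe_le_norm _ _
            _ ≤ η/4 := by
              rw [← dist_eq_norm, dist_comm]; exact le_of_lt hfp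
      _ = η/4 := by simp
  calc dist ((∫ τ in (0:ℝ)..T, f (ψ α θ τ)) / T) (∫ x, f x)
      ≤ dist ((∫ τ in (0:ℝ)..T, f (ψ α θ τ)) / T) ((∫ τ in (0:ℝ)..T, p (ψ α θ τ)) / T)
        + dist ((∫ τ in (0:ℝ)..T, p (ψ α θ τ)) / T) (∫ x, p x)
        + dist (∫ x, p x) (∫ x, f x) := dist_triangle4 _ _ _ _
    _ < η := by linarith [hN T hTN]


lemma avg_tendstoR (hline : ∀ n : Fin m → ℤ, n ≠ 0 → (∑ k, (n k : ℝ) * α k) ≠ 0)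
    (f : C(G m, ℝ)) :
    Tendsto (fun T : ℝ => (∫ τ in (0:ℝ)..T, f (ψ α θ τ)) / T) atTop (nhds (∫ x, f x)) := by
  set g : C(G m, ℂ) := ⟨fun x => (f x : ℂ), Complex.continuous_ofReal.comp f.continuous⟩ with hg
  have h := (Complex.continuous_re.tendsto _).comp (avg_tendstoC α θ hline g)
  have h1 : (∫ x : G m, g x) = ((∫ x : G m, f x : ℝ) : ℂ) := by
    simp only [hg, ContinuousMap.coe_mk]
    exact integral_ofReal
  rw [h1, Complex.ofReal_re] at h
  refine h.congr fun T => ?_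
  simp only [Function.comp_apply, hg, ContinuousMap.coe_mk]
  rw [intervalIntegral.integral_ofReal, ← Complex.ofReal_div, Complex.ofReal_re]


lemma hline_of (hα : LinearIndependent ℚ α) :
    ∀ n : Fin m → ℤ, n ≠ 0 → (∑ k, (n k : ℝ) * α k) ≠ 0 := by
  intro n hn h
  have h2 : ∑ k, ((n k : ℚ) • α k) = 0 := by
    rw [← h]
    refine Finset.sum_congr rfl fun k _ => ?_
    rw [Rat.smul_def]
    norm_num
  have h3 := Fintype.linearIndependent_iff.1 hα (fun k => (n k : ℚ)) h2
  apply hn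
  funext k
  have := h3 k
  simpa using this

lemma integrable_cmR (f : C(G m, ℝ)) : Integrable f :=
  f.continuous.integrable_of_hasCompactSupport (HasCompactSupport.of_compactSpace _)

lemma vol_closedBall (r : ℝ) (hr : 0 ≤ r) :
    (volume (Metric.closedBall (0 : G m) r)).toReal = (min 1 (2*r))^m := by
  rw [closedBall_pi _ hr, volume_pi_pi]
  simp only [AddCircle.volume_closedBall]
  rw [Finset.prod_const, Finset.card_univ, Fintype.card_fin, ENNReal.toReal_pow,
    ENNReal.toReal_ofReal (le_min zero_le_one (by linarith))]

end KW

open KW in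
/-- The Kronecker–Weyl approximation theorem: if `α₁, …, α_m` are linearly independent
over `ℚ`, then for any targets `θ₁, …, θ_m` and any `ε > 0`, the set of `τ ∈ [0,T]`
with `‖τ αₖ - θₖ‖ < ε` for all `k` has a positive limiting density. -/
theorem kronecker_weyl (m : ℕ) (α : Fin m → ℝ) (hα : LinearIndependent ℚ α)
    (θ : Fin m → ℝ) (ε : ℝ) (hε : 0 < ε) :
    ∃ L : ℝ, 0 < L ∧
      Tendsto (fun T : ℝ =>
          (volume ({τ : ℝ | ∀ k : Fin m, distNearestInt (τ * α k - θ k) < ε} ∩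
            Set.Icc 0 T)).toReal / T)
        atTop (nhds L) := by
  classical
  have hline := KW.hline_of α hα
  set F : ℝ → ℝ := fun r => (min 1 (2*r))^m with hF
  refine ⟨F ε, pow_pos (lt_min one_pos (by linarith)) m, ?_⟩
  set S : Set ℝ := {τ : ℝ | ∀ k : Fin m, distNearestInt (τ * α k - θ k) < ε} with hSdef
  have hSball : S = KW.ψ α θ ⁻¹' (Metric.ball (0 : KW.G m) ε) := by
    ext τ
    simp only [hSdef, Set.mem_setOf_eq, Set.mem_preimage, Metric.mem_ball]
    rw [dist_pi_lt_iff hε]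
    refine forall_congr' fun k => ?_
    have h1 : KW.ψ α θ τ k = ((τ * α k - θ k : ℝ) : AddCircle (1:ℝ)) := rfl
    rw [h1, Pi.zero_apply, dist_zero_right, show ‖((τ * α k - θ k : ℝ) : AddCircle (1:ℝ))‖
      = distNearestInt (τ * α k - θ k) from UnitAddCircle.norm_eq]
  have hSmeas : MeasurableSet S :=
    hSball ▸ (Metric.isOpen_ball.preimage (KW.continuous_ψ α θ)).measurableSet
  -- volume and indicator
  have hVeq : ∀ T : ℝ, 0 ≤ T → (volume (S ∩ Set.Icc 0 T)).toReal
      = ∫ τ in (0:ℝ)..T, S.indicator (fun _ => (1:ℝ)) τ := by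
    intro T hT
    rw [intervalIntegral.integral_of_le hT, MeasureTheory.setIntegral_indicator hSmeas,
      setIntegral_const, smul_eq_mul, mul_one, Set.inter_comm (Set.Ioc (0:ℝ) T) S]
    congr 1
    apply le_antisymm
    · calc volume (S ∩ Set.Icc 0 T) ≤ volume ((S ∩ Set.Ioc 0 T) ∪ {0}) := by
            apply measure_mono
            rintro x ⟨hxS, hx0, hxT⟩
            rcases eq_or_lt_of_le hx0 with h | h
            · exact Or.inr (by simp [← h])
            · exact Or.inl ⟨hxS, h, hxT⟩
        _ ≤ volume (S ∩ Set.Ioc 0 T) + volume ({0} : Set ℝ) := measure_union_le _ _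
        _ = volume (S ∩ Set.Ioc 0 T) := by simp
    · exact measure_mono (Set.inter_subset_inter_right _ Set.Ioc_subset_Icc_self)
  have hind_int : ∀ T : ℝ, IntervalIntegrable (S.indicator fun _ => (1:ℝ)) volume 0 T := by
    intro T
    rw [intervalIntegrable_iff]
    have : volume (Set.uIoc (0:ℝ) T) < ⊤ := measure_Ioc_lt_top
    exact (MeasureTheory.integrableOn_const this.ne).indicator hSmeas
  rw [Metric.tendsto_atTop]
  intro η hη
  have hFc : ContinuousAt F ε :=
    (((continuous_const.min ((continuous_mul_left 2))).pow m).continuousAt)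
  obtain ⟨δ₀, hδ₀, hδ₀p⟩ := Metric.continuousAt_iff.1 hFc (η/2) (by linarith)
  set δ : ℝ := min (δ₀/2) (ε/2) with hδdef
  have hδpos : 0 < δ := lt_min (by linarith) (by linarith)
  have hδε : δ ≤ ε/2 := min_le_right _ _
  have hδδ₀ : δ < δ₀ := lt_of_le_of_lt (min_le_left _ _) (by linarith)
  -- cutoff functions
  have hdistc : Continuous fun x : KW.G m => dist x (0 : KW.G m) :=
    continuous_id.dist continuous_const
  set gl : C(KW.G m, ℝ) := ⟨fun x => max 0 (min 1 ((ε - dist x 0)/δ)),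
    continuous_const.max (continuous_const.min
      ((continuous_const.sub hdistc).div_const δ))⟩ with hgl
  set gu : C(KW.G m, ℝ) := ⟨fun x => max 0 (min 1 ((ε + δ - dist x 0)/δ)),
    continuous_const.max (continuous_const.min
      ((continuous_const.sub hdistc).div_const δ))⟩ with hgu
  -- bounds on space integrals
  have hgl_ge : F (ε - δ) ≤ ∫ x, gl x := by
    have hptw : (Metric.closedBall (0 : KW.G m) (ε - δ)).indicator (fun _ => (1:ℝ)) ≤ gl := by
      intro x
      by_cases hx : x ∈ Metric.closedBall (0 : KW.G m) (ε - δ)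
      · rw [Set.indicator_of_mem hx]
        have hd : dist x (0 : KW.G m) ≤ ε - δ := Metric.mem_closedBall.1 hx
        have h1 : (1:ℝ) ≤ (ε - dist x 0)/δ := by
          rw [le_div_iff₀ hδpos]; linarith
        simp only [hgl, ContinuousMap.coe_mk]
        rw [min_eq_left h1]
        exact le_max_right _ _
      · rw [Set.indicator_of_notMem hx]
        exact le_max_left _ _
    calc F (ε - δ) = (volume (Metric.closedBall (0 : KW.G m) (ε - δ))).toReal := by
          rw [KW.vol_closedBall _ (by linarith)]
      _ = ∫ x, (Metric.closedBall (0 : KW.G m) (ε - δ)).indicator (fun _ => (1:ℝ)) x := by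
          rw [MeasureTheory.integral_indicator_const (1:ℝ) Metric.isClosed_closedBall.measurableSet,
            smul_eq_mul, mul_one, measureReal_def]
      _ ≤ ∫ x, gl x := by
          apply integral_mono ?_ (KW.integrable_cmR gl) hptw
          exact (integrable_const (1:ℝ)).indicator Metric.isClosed_closedBall.measurableSet
  have hgu_le : (∫ x, gu x) ≤ F (ε + δ) := by
    have hptw : (gu : KW.G m → ℝ) ≤
        (Metric.closedBall (0 : KW.G m) (ε + δ)).indicator (fun _ => (1:ℝ)) := by
      intro x
      by_cases hx : x ∈ Metric.closedBall (0 : KW.G m) (ε + δ)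
      · rw [Set.indicator_of_mem hx]
        exact max_le zero_le_one (min_le_left _ _)
      · rw [Set.indicator_of_notMem hx]
        have hd : ε + δ < dist x (0 : KW.G m) := by
          by_contra h; exact hx (Metric.mem_closedBall.2 (by linarith))
        have h1 : (ε + δ - dist x 0)/δ ≤ 0 :=
          div_nonpos_of_nonpos_of_nonneg (by linarith) (le_of_lt hδpos)
        simp only [hgu, ContinuousMap.coe_mk]
        exact le_of_eq (max_eq_left ((min_le_right _ _).trans h1))
    calc (∫ x, gu x)
        ≤ ∫ x, (Metric.closedBall (0 : KW.G m) (ε + δ)).indicator (fun _ => (1:ℝ)) x := by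
          apply integral_mono (KW.integrable_cmR gu) ?_ hptw
          exact (integrable_const (1:ℝ)).indicator Metric.isClosed_closedBall.measurableSet
      _ = F (ε + δ) := by
          rw [MeasureTheory.integral_indicator_const (1:ℝ) Metric.isClosed_closedBall.measurableSet,
            smul_eq_mul, mul_one, measureReal_def, KW.vol_closedBall _ (by linarith)]
  -- F values close to F ε
  have hFu : F (ε + δ) < F ε + η/2 := by
    have := hδ₀p (x := ε + δ) (by rw [Real.dist_eq]; rw [abs_of_pos (by linarith : (0:ℝ) < ε + δ - ε)] at *; linarith)
    rw [Real.dist_eq, abs_sub_lt_iff] at this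
    linarith [this.1]
  have hFl : F ε - η/2 < F (ε - δ) := by
    have := hδ₀p (x := ε - δ) (by rw [Real.dist_eq]; rw [abs_of_neg (by linarith : ε - δ - ε < 0)] at *; linarith)
    rw [Real.dist_eq, abs_sub_lt_iff] at this
    linarith [this.2]
  -- time averages converge
  obtain ⟨N₁, hN₁⟩ := Metric.tendsto_atTop.1 (KW.avg_tendstoR α θ hline gl) (η/4) (by linarith)
  obtain ⟨N₂, hN₂⟩ := Metric.tendsto_atTop.1 (KW.avg_tendstoR α θ hline gu) (η/4) (by linarith)
  refine ⟨max (max N₁ N₂) 1, fun T hT => ?_⟩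
  have hT1 : (1:ℝ) ≤ T := le_trans (le_max_right _ _) hT
  have hT0 : (0:ℝ) < T := by linarith
  have hTN₁ : N₁ ≤ T := le_trans ((le_max_left _ _).trans (le_max_left _ _)) hT
  have hTN₂ : N₂ ≤ T := le_trans ((le_max_right _ _).trans (le_max_left _ _)) hT
  -- pointwise comparisons along the flow
  have hlow : (∫ τ in (0:ℝ)..T, gl (KW.ψ α θ τ))
      ≤ ∫ τ in (0:ℝ)..T, S.indicator (fun _ => (1:ℝ)) τ := by
    apply intervalIntegral.integral_mono_on (le_of_lt hT0)
      ((gl.continuous.comp (KW.continuous_ψ α θ)).intervalIntegrable 0 T) (hind_int T)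
    intro τ _
    by_cases hτ : τ ∈ S
    · rw [Set.indicator_of_mem hτ]
      exact max_le zero_le_one (min_le_left _ _)
    · rw [Set.indicator_of_notMem hτ]
      have hd : ε ≤ dist (KW.ψ α θ τ) (0 : KW.G m) := by
        rw [hSball] at hτ
        simpa using hτ
      have h1 : (ε - dist (KW.ψ α θ τ) 0)/δ ≤ 0 :=
        div_nonpos_of_nonpos_of_nonneg (by linarith) (le_of_lt hδpos)
      simp only [hgl, ContinuousMap.coe_mk, Function.comp_apply]
      exact le_of_eq (max_eq_left ((min_le_right _ _).trans h1))
  have hhigh : (∫ τ in (0:ℝ)..T, S.indicator (fun _ => (1:ℝ)) τ)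
      ≤ ∫ τ in (0:ℝ)..T, gu (KW.ψ α θ τ) := by
    apply intervalIntegral.integral_mono_on (le_of_lt hT0) (hind_int T)
      ((gu.continuous.comp (KW.continuous_ψ α θ)).intervalIntegrable 0 T)
    intro τ _
    by_cases hτ : τ ∈ S
    · rw [Set.indicator_of_mem hτ]
      have hd : dist (KW.ψ α θ τ) (0 : KW.G m) < ε := by
        rw [hSball] at hτ
        simpa using hτ
      have h1 : (1:ℝ) ≤ (ε + δ - dist (KW.ψ α θ τ) 0)/δ := by
        rw [le_div_iff₀ hδpos]; linarith
      simp only [hgu, ContinuousMap.coe_mk, Function.comp_apply]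
      rw [min_eq_left h1]
      exact le_max_right _ _
    · rw [Set.indicator_of_notMem hτ]
      exact le_max_left _ _
  have hNl := hN₁ T hTN₁
  have hNu := hN₂ T hTN₂
  rw [Real.dist_eq, abs_sub_lt_iff] at hNl hNu
  have hupper : (volume (S ∩ Set.Icc 0 T)).toReal / T < F ε + η := by
    rw [hVeq T (le_of_lt hT0)]
    calc (∫ τ in (0:ℝ)..T, S.indicator (fun _ => (1:ℝ)) τ) / T
        ≤ (∫ τ in (0:ℝ)..T, gu (KW.ψ α θ τ)) / T := by gcongr
      _ < (∫ x, gu x) + η/4 := by linarith [hNu.1]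
      _ ≤ F (ε + δ) + η/4 := by linarith
      _ < F ε + η := by linarith
  have hlower : F ε - η < (volume (S ∩ Set.Icc 0 T)).toReal / T := by
    rw [hVeq T (le_of_lt hT0)]
    calc F ε - η < F (ε - δ) - η/4 - η/4 := by linarith
      _ ≤ (∫ x, gl x) - η/2 := by linarith
      _ < (∫ τ in (0:ℝ)..T, gl (KW.ψ α θ τ)) / T := by linarith [hNl.2]
      _ ≤ (∫ τ in (0:ℝ)..T, S.indicator (fun _ => (1:ℝ)) τ) / T := by gcongr
  rw [Real.dist_eq, abs_sub_lt_iff]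
  constructor <;> linarith


end
end

section
/- Functional independence from denseness: Let φ be holomorphic on D(1/2,1) and suppose for every s₀ ∈ D(1/2,1) the set {(φ(s₀+iτ), φ'(s₀+iτ), ..., φ^{(m−1)}(s₀+iτ)) : τ ∈ ℝ} is dense in ℂ^m. If f₀,...,f_n : ℂ^m → ℂ are continuous functions such that Σ_{l=0}^n s^l f_l(φ(s), φ'(s), ..., φ^{(m−1)}(s)) = 0 for all s ∈ D(1/2,1), then f_l ≡ 0 for all 0 ≤ l ≤ n. -/
open Complex Polynomial Filter Topology

/-- Functional independence from denseness: if for every `s₀` in the strip `D(1/2,1)`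
the vectors of the first `m` derivatives of `φ` along the vertical line through `s₀`
are dense in `ℂ^m`, and continuous functions `f₀, …, f_n` satisfy
`Σ_l s^l f_l(φ(s), …, φ^{(m-1)}(s)) = 0` on the strip, then all `f_l` vanish
identically. -/
theorem functional_independence (m n : ℕ) (φ : ℂ → ℂ)
    (hφ : DifferentiableOn ℂ φ {s : ℂ | 1/2 < s.re ∧ s.re < 1})
    (hdense : ∀ s₀ : ℂ, 1/2 < s₀.re → s₀.re < 1 →
      ∀ z : Fin m → ℂ, ∀ ε : ℝ, 0 < ε → ∃ τ : ℝ, ∀ k : Fin m,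
        ‖iteratedDeriv (k : ℕ) φ (s₀ + τ * Complex.I) - z k‖ < ε)
    (f : Fin (n + 1) → (Fin m → ℂ) → ℂ) (hf : ∀ l, Continuous (f l))
    (hrel : ∀ s : ℂ, 1/2 < s.re → s.re < 1 →
      ∑ l : Fin (n + 1), s ^ (l : ℕ) *
        f l (fun k : Fin m => iteratedDeriv (k : ℕ) φ s) = 0) :
    ∀ l : Fin (n + 1), ∀ z : Fin m → ℂ, f l z = 0 := by
  classical
  set S : Set ℂ := {s : ℂ | 1/2 < s.re ∧ s.re < 1} with hSdef
  have hSopen : IsOpen S := by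
    have : S = Complex.re ⁻¹' (Set.Ioo (1/2) 1) := by
      ext s; simp [hSdef, Set.mem_Ioo, and_comm]
    rw [this]
    exact isOpen_Ioo.preimage Complex.continuous_re
  have hvec : ∀ k : ℕ, ContinuousOn (iteratedDeriv k φ) S := by
    have h : ∀ k : ℕ, AnalyticOnNhd ℂ (iteratedDeriv k φ) S := by
      intro k
      induction k with
      | zero => simpa using hφ.analyticOnNhd hSopen
      | succ k ih => rw [iteratedDeriv_succ]; exact ih.deriv
    exact fun k => (h k).continuousOn
  -- the key step
  have key : ∀ j : Fin (n + 1), (∀ l : Fin (n + 1), (j : ℕ) < (l : ℕ) →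
      ∀ z : Fin m → ℂ, f l z = 0) → ∀ z : Fin m → ℂ, f j z = 0 := by
    intro j hhigh z
    set σ : Fin (n + 1) → ℝ := fun i => 1/2 + ((i : ℕ) + 1) / (2 * (n + 2)) with hσdef
    have hσlo : ∀ i, 1/2 < σ i := by
      intro i
      have : (0:ℝ) < ((i : ℕ) + 1) / (2 * (n + 2)) := by positivity
      simp only [hσdef]; linarith
    have hσhi : ∀ i, σ i < 1 := by
      intro i
      have hi : ((i : ℕ) : ℝ) + 1 ≤ n + 1 := by
        have := i.is_le; exact_mod_cast by omega
      have hpos : (0:ℝ) < 2 * (n + 2) := by positivity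
      have : ((i : ℕ) + 1 : ℝ) / (2 * (n + 2)) ≤ (n + 1 : ℝ) / (2 * (n + 2)) := by
        gcongr
      have h2 : ((n:ℝ) + 1) / (2 * (n + 2)) < 1/2 := by
        rw [div_lt_iff₀ hpos]; ring_nf; linarith
      simp only [hσdef]; linarith
    have hσinj : Function.Injective σ := by
      intro a b hab
      have : ((a : ℕ) : ℝ) = ((b : ℕ) : ℝ) := by
        simp only [hσdef] at hab
        field_simp at hab
        linarith
      exact Fin.ext (by exact_mod_cast this)
    by_cases hA : ∃ i : Fin (n + 1), ∀ k : ℕ, ∃ τ : ℝ, (k : ℝ) < |τ| ∧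
        ∀ q : Fin m, ‖iteratedDeriv (q : ℕ) φ ((σ i : ℂ) + τ * Complex.I) - z q‖ < 1 / (k + 1)
    · -- case A : unbounded approximations, divide by s^j and take limits
      obtain ⟨i, hi⟩ := hA
      choose τ hτ hclose using hi
      set s : ℕ → ℂ := fun k => (σ i : ℂ) + (τ k) * Complex.I with hsdef
      have hsre : ∀ k, (s k).re = σ i := by
        intro k; simp [hsdef]
      have hsim : ∀ k, (s k).im = τ k := by
        intro k; simp [hsdef]
      have hsnorm : ∀ k : ℕ, (k : ℝ) < ‖s k‖ := by
        intro k
        calc (k : ℝ) < |τ k| := hτ k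
          _ = |(s k).im| := by rw [hsim]
          _ ≤ ‖s k‖ := Complex.abs_im_le_norm _
          _ = ‖s k‖ := rfl
      have hs0 : ∀ k, s k ≠ 0 := by
        intro k
        have h := hsnorm k
        have : (0:ℝ) ≤ (k:ℝ) := Nat.cast_nonneg k
        intro h0
        rw [h0] at h; simp at h; linarith
      have hsS : ∀ k, s k ∈ S := fun k => ⟨by rw [hsre]; exact hσlo i,
        by rw [hsre]; exact hσhi i⟩
      set g : ℕ → (Fin m → ℂ) := fun k => fun q : Fin m => iteratedDeriv (q : ℕ) φ (s k)
        with hgdef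
      have hone : Tendsto (fun k : ℕ => 1 / ((k:ℝ) + 1)) atTop (𝓝 0) :=
        tendsto_one_div_add_atTop_nhds_zero_nat
      have hg : Tendsto g atTop (𝓝 z) := by
        rw [tendsto_pi_nhds]
        intro q
        rw [tendsto_iff_norm_sub_tendsto_zero]
        apply squeeze_zero (fun k => norm_nonneg _) (fun k => (hclose k q).le) hone
      have hflim : ∀ l : Fin (n + 1), Tendsto (fun k => f l (g k)) atTop (𝓝 (f l z)) :=
        fun l => ((hf l).tendsto z).comp hg
      have hinv : Tendsto (fun k => (s k)⁻¹) atTop (𝓝 0) := by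
        rw [tendsto_zero_iff_norm_tendsto_zero]
        apply squeeze_zero' (Eventually.of_forall fun k => norm_nonneg _)
          (?_ : ∀ᶠ k : ℕ in atTop, ‖(s k)⁻¹‖ ≤ 1 / (k:ℝ)) tendsto_one_div_atTop_nhds_zero_nat
        filter_upwards [eventually_ge_atTop 1] with k hk
        have hk0 : (0:ℝ) < (k:ℝ) := by exact_mod_cast hk
        rw [norm_inv, inv_eq_one_div]
        exact one_div_le_one_div_of_le hk0 (hsnorm k).le
      -- the main limit computation
      set F : ℕ → ℂ := fun k => ∑ l : Fin (n + 1),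
        (s k) ^ (l : ℕ) * f l (g k) / (s k) ^ (j : ℕ) with hFdef
      have hF0 : ∀ k, F k = 0 := by
        intro k
        rw [hFdef]
        simp only
        rw [← Finset.sum_div, hrel (s k) (hsS k).1 (hsS k).2, zero_div]
      have hFlim : Tendsto F atTop
          (𝓝 (∑ l : Fin (n + 1), if l = j then f j z else 0)) := by
        apply tendsto_finset_sum
        intro l _
        rcases lt_trichotomy (l : ℕ) (j : ℕ) with hlt | heq | hgt
        · have hne : l ≠ j := fun h => by simp [h] at hlt
          simp only [hne, if_false]
          have heqfun : (fun k => (s k) ^ (l : ℕ) * f l (g k) / (s k) ^ (j : ℕ))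
              = fun k => f l (g k) * ((s k)⁻¹) ^ ((j : ℕ) - (l : ℕ)) := by
            funext k
            have h1 : (s k) ^ ((j : ℕ) - (l : ℕ)) * (s k) ^ (l : ℕ) = (s k) ^ (j : ℕ) := by
              rw [← pow_add, Nat.sub_add_cancel hlt.le]
            have h2 : ((s k)⁻¹) ^ ((j : ℕ) - (l : ℕ)) = (s k) ^ (l : ℕ) / (s k) ^ (j : ℕ) := by
              rw [inv_pow, eq_div_iff (pow_ne_zero _ (hs0 k)), ← h1,
                inv_mul_cancel_left₀ (pow_ne_zero _ (hs0 k))]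
            rw [h2, mul_div_assoc', mul_comm (f l (g k)) ((s k) ^ (l : ℕ))]
          rw [heqfun]
          have h0 : ((0:ℂ)) ^ ((j : ℕ) - (l : ℕ)) = 0 :=
            zero_pow (by omega)
          have := (hflim l).mul (hinv.pow ((j : ℕ) - (l : ℕ)))
          rw [h0, mul_zero] at this
          exact this
        · have heq' : l = j := Fin.ext heq
          subst heq'
          simp only [if_true]
          have heqfun : (fun k => (s k) ^ (l : ℕ) * f l (g k) / (s k) ^ (l : ℕ))
              = fun k => f l (g k) := by
            funext k
            rw [mul_comm, mul_div_assoc, div_self (pow_ne_zero _ (hs0 k)), mul_one]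
          rw [heqfun]
          exact hflim l
        · have hne : l ≠ j := fun h => by simp [h] at hgt
          simp only [hne, if_false]
          have heqfun : (fun k => (s k) ^ (l : ℕ) * f l (g k) / (s k) ^ (j : ℕ))
              = fun _ => (0:ℂ) := by
            funext k
            rw [hhigh l hgt (g k), mul_zero, zero_div]
          rw [heqfun]
          exact tendsto_const_nhds
      have hsum : (∑ l : Fin (n + 1), if l = j then f j z else 0) = f j z := by
        simp
      rw [hsum] at hFlim
      have hzero : Tendsto F atTop (𝓝 0) := by
        have : F = fun _ => (0:ℂ) := funext hF0
        rw [this]; exact tendsto_const_nhds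
      exact (tendsto_nhds_unique hFlim hzero)
    · -- case B : bounded approximations give exact hits; Vandermonde/polynomial argument
      push_neg at hA
      have hroot : ∀ i : Fin (n + 1), ∃ s' : ℂ, s' ∈ S ∧ s'.re = σ i ∧
          ∀ q : Fin m, iteratedDeriv (q : ℕ) φ s' = z q := by
        intro i
        obtain ⟨K, hK⟩ := hA i
        -- build a sequence of approximations with bounded heights
        have hseq : ∀ t : ℕ, ∃ τ : ℝ, |τ| ≤ K ∧
            ∀ q : Fin m, ‖iteratedDeriv (q : ℕ) φ ((σ i : ℂ) + τ * Complex.I) - z q‖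
              < 1 / (t + 1) := by
          intro t
          have hε : (0:ℝ) < min (1 / ((K:ℝ) + 1)) (1 / ((t:ℝ) + 1)) :=
            lt_min (by positivity) (by positivity)
          obtain ⟨τ, hτ⟩ := hdense ((σ i : ℂ)) (by simpa using hσlo i)
            (by simpa using hσhi i) z _ hε
          refine ⟨τ, ?_, fun q => lt_of_lt_of_le (hτ q) (min_le_right _ _)⟩
          by_contra hcon
          push_neg at hcon
          obtain ⟨q, hq⟩ := hK τ hcon
          exact absurd (lt_of_lt_of_le (hτ q) (min_le_left _ _)) (not_lt.mpr hq)
        choose τ hτbdd hτclose using hseq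
        have hmem : ∀ t, τ t ∈ Set.Icc (-(K:ℝ)) K := fun t =>
          Set.mem_Icc.mpr (abs_le.mp (hτbdd t))
        obtain ⟨τ₀, hτ₀mem, ψ, hψ, hψlim⟩ := (isCompact_Icc).tendsto_subseq hmem
        set s' : ℂ := (σ i : ℂ) + τ₀ * Complex.I with hs'def
        have hs're : s'.re = σ i := by simp [hs'def]
        have hs'S : s' ∈ S := ⟨by rw [hs're]; exact hσlo i, by rw [hs're]; exact hσhi i⟩
        refine ⟨s', hs'S, hs're, fun q => ?_⟩
        have hcont : ContinuousAt (iteratedDeriv (q : ℕ) φ) s' :=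
          (hvec (q : ℕ)).continuousAt (hSopen.mem_nhds hs'S)
        have hmap : Tendsto (fun t : ℕ => (σ i : ℂ) + (τ (ψ t)) * Complex.I) atTop
            (𝓝 s') := by
          rw [hs'def]
          apply Tendsto.add tendsto_const_nhds
          apply Tendsto.mul _ tendsto_const_nhds
          exact (Complex.continuous_ofReal.tendsto τ₀).comp hψlim
        have h1 : Tendsto (fun t : ℕ => iteratedDeriv (q : ℕ) φ
            ((σ i : ℂ) + (τ (ψ t)) * Complex.I)) atTop (𝓝 (iteratedDeriv (q : ℕ) φ s')) :=
          hcont.tendsto.comp hmap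
        have h2 : Tendsto (fun t : ℕ => iteratedDeriv (q : ℕ) φ
            ((σ i : ℂ) + (τ (ψ t)) * Complex.I)) atTop (𝓝 (z q)) := by
          rw [tendsto_iff_norm_sub_tendsto_zero]
          refine squeeze_zero (fun t => norm_nonneg _) (fun t => ?_)
            tendsto_one_div_add_atTop_nhds_zero_nat
          refine le_trans (hτclose (ψ t) q).le ?_
          have ht : t ≤ ψ t := hψ.le_apply
          gcongr
        exact tendsto_nhds_unique h1 h2
      choose sstar hsS hsre hsval using hroot
      have hinj : Function.Injective sstar := by
        intro a b hab
        apply hσinj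
        rw [← hsre a, ← hsre b, hab]
      set p : Polynomial ℂ := ∑ l : Fin (n + 1), Polynomial.monomial (l : ℕ) (f l z)
        with hpdef
      have heval : ∀ i : Fin (n + 1), p.eval (sstar i) = 0 := by
        intro i
        have h := hrel (sstar i) (hsS i).1 (hsS i).2
        have hz : (fun k : Fin m => iteratedDeriv (k : ℕ) φ (sstar i)) = z :=
          funext (hsval i)
        rw [hz] at h
        rw [hpdef, Polynomial.eval_finset_sum]
        simp only [Polynomial.eval_monomial]
        rw [← h]
        exact Finset.sum_congr rfl fun l _ => by ring
      have hdeg : p.natDegree < Fintype.card (Fin (n + 1)) := by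
        rw [Fintype.card_fin]
        refine lt_of_le_of_lt (Polynomial.natDegree_sum_le_of_forall_le _ _
          (fun l _ => le_trans (Polynomial.natDegree_monomial_le _) l.is_le)) ?_
        omega
      have hp0 : p = 0 := Polynomial.eq_zero_of_natDegree_lt_card_of_eval_eq_zero
        p hinj heval hdeg
      have hcoeff : p.coeff (j : ℕ) = f j z := by
        rw [hpdef, Polynomial.finset_sum_coeff]
        rw [Finset.sum_eq_single j]
        · simp [Polynomial.coeff_monomial]
        · intro b _ hb
          rw [Polynomial.coeff_monomial, if_neg (fun h => hb (Fin.ext h))]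
        · intro h; exact absurd (Finset.mem_univ j) h
      rw [← hcoeff, hp0, Polynomial.coeff_zero]
  -- downward induction
  have main : ∀ d : ℕ, ∀ l : Fin (n + 1), n - (l : ℕ) < d → ∀ z : Fin m → ℂ, f l z = 0 := by
    intro d
    induction d with
    | zero => intro l hl; omega
    | succ d ih =>
      intro l hl z
      refine key l (fun l' hl' z' => ih l' ?_ z') z
      have h1 := l'.is_le
      omega
  intro l z
  exact main (n + 1) l (by omega) z
end
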